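/- (Proposition 2(ii), finite attainment of small gap.) Let c₀ ∈ (0,1) and ε ∈ (0, c₀²]. Define ϖ := (L + 2L_f̃)√p + ‖∇f̃(E/√m)‖_F, ϖ_lin := 4L_f̃ p + 2√p·‖∇f̃(E/√m)‖_F + (5/2)Lp, η(c₀,p) := 2(1 − 1/p)√(p − c₀²) + 2√(1 − c₀²), ρ̂ := max{2ϖ_lin/η(c₀,p), 2ϖ_lin/ε}. Let V⁰ ∈ S be such that all entries of u₁(V⁰) are nonzero, set μ := min over j of |u₁(V⁰)_j| and ρ̄ := (Lp + ϖ)/(μ c₀), and assume ρ > max{ρ̂, ρ̄} and L ≥ L_f̃. Let {V^l}_{l≥0} be generated by iterating the algorithmic update with this fixed ρ (assume every column of each G(V^l) is nonzero). Then there exists an index l̄ with 1 ≤ l̄ ≤ ⌈(2c₀² − ε)/η(c₀,p)⌉ + 1 such that for all l ≥ l̄, ‖V^l‖_F² − ‖V^l‖² = p − ‖V^l‖² ≤ ε. -/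

import Mathlib

open Matrix

noncomputable section

/-- Squared Frobenius norm `‖A‖_F²`. -/
def frobSq {a b : ℕ} (A : Matrix (Fin a) (Fin b) ℝ) : ℝ := ∑ i, ∑ j, A i j ^ 2

/-- Frobenius norm `‖A‖_F`. -/
def frobNorm {a b : ℕ} (A : Matrix (Fin a) (Fin b) ℝ) : ℝ := Real.sqrt (frobSq A)

/-- Trace (Frobenius) inner product `⟨A,B⟩ = tr(AᵀB)`. -/
def frobInner {a b : ℕ} (A B : Matrix (Fin a) (Fin b) ℝ) : ℝ := ∑ i, ∑ j, A i j * B i j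

/-- Squared spectral norm: `sup {‖Vx‖₂² : ‖x‖₂ = 1}`. -/
def specSq {a b : ℕ} (V : Matrix (Fin a) (Fin b) ℝ) : ℝ :=
  sSup {c | ∃ x : Fin b → ℝ, (∑ j, x j ^ 2) = 1 ∧ c = ∑ i, (∑ j, V i j * x j) ^ 2}

/-- Spectral norm (largest singular value). -/
def specNorm {a b : ℕ} (V : Matrix (Fin a) (Fin b) ℝ) : ℝ := Real.sqrt (specSq V)

/-- Membership in `S`: all columns have unit Euclidean norm. -/
def unitCols {a b : ℕ} (V : Matrix (Fin a) (Fin b) ℝ) : Prop :=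
  ∀ j, ∑ i, V i j ^ 2 = 1

/-- Column-wise normalization to unit Euclidean norm (projection onto `S`). -/
def normalizeCols {a b : ℕ} (G : Matrix (Fin a) (Fin b) ℝ) : Matrix (Fin a) (Fin b) ℝ :=
  Matrix.of fun i j => G i j / Real.sqrt (∑ i', G i' j ^ 2)

/-- `u` is a unit eigenvector of `VᵀV` associated with its largest eigenvalue `lam`
(the Rayleigh-quotient bound states that `lam` is the largest eigenvalue). -/
def isTopEigen {a b : ℕ} (V : Matrix (Fin a) (Fin b) ℝ) (lam : ℝ) (u : Fin b → ℝ) : Prop :=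
  (∑ j, u j ^ 2) = 1 ∧ (Vᵀ * V) *ᵥ u = lam • u ∧
    ∀ x : Fin b → ℝ, x ⬝ᵥ ((Vᵀ * V) *ᵥ x) ≤ lam * (x ⬝ᵥ x)

/-- `Γ(V) = −2 V u uᵀ` where `u = u₁(V)`. -/
def GammaOf {a b : ℕ} (V : Matrix (Fin a) (Fin b) ℝ) (u : Fin b → ℝ) :
    Matrix (Fin a) (Fin b) ℝ := (-2 : ℝ) • (V * vecMulVec u u)

/-- The update direction `G(V) = (2ρ+L)⁻¹ (L V − ∇f̃(V) − ρ Γ(V))`. -/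
def Gmap {a b : ℕ} (gradf : Matrix (Fin a) (Fin b) ℝ → Matrix (Fin a) (Fin b) ℝ)
    (ρ L : ℝ) (V : Matrix (Fin a) (Fin b) ℝ) (u : Fin b → ℝ) : Matrix (Fin a) (Fin b) ℝ :=
  (2 * ρ + L)⁻¹ • (L • V - gradf V - ρ • GammaOf V u)

/-- Penalized objective `Φ_ρ(V) = f̃(V) + ρ(‖V‖_F² − ‖V‖²)`. -/
def Phi {a b : ℕ} (f : Matrix (Fin a) (Fin b) ℝ → ℝ) (ρ : ℝ)
    (V : Matrix (Fin a) (Fin b) ℝ) : ℝ := f V + ρ * (frobSq V - specSq V)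

/-- Stationarity residual `𝒢_ρ(V,Γ) = inf_t ‖∇f̃(V) + 2ρV + ρΓ + V·Diag(t)‖_F`. -/
def Gres {a b : ℕ} (gradf : Matrix (Fin a) (Fin b) ℝ → Matrix (Fin a) (Fin b) ℝ) (ρ : ℝ)
    (V Γ : Matrix (Fin a) (Fin b) ℝ) : ℝ :=
  ⨅ t : Fin b → ℝ, frobNorm (gradf V + (2 * ρ) • V + ρ • Γ + V * Matrix.diagonal t)

/-- The all-ones matrix `E` scaled by `1/√m`. -/
def Escaled (a b : ℕ) : Matrix (Fin a) (Fin b) ℝ :=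
  (Real.sqrt a)⁻¹ • Matrix.of fun _ _ => (1 : ℝ)

attribute [local instance] Matrix.frobeniusNormedAddCommGroup Matrix.frobeniusNormedSpace

/-- The continuous linear functional `W ↦ ⟨A, W⟩` (Frobenius pairing); used to state that
`∇f̃` is the gradient of `f̃` with respect to the trace inner product. -/
def frobCLM {a b : ℕ} (A : Matrix (Fin a) (Fin b) ℝ) :
    Matrix (Fin a) (Fin b) ℝ →L[ℝ] ℝ :=
  LinearMap.toContinuousLinearMap
    { toFun := fun W => frobInner A W
      map_add' := fun W W' => by
        simp [frobInner, Matrix.add_apply, mul_add, Finset.sum_add_distrib]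
      map_smul' := fun c W => by
        simp [frobInner, Matrix.smul_apply, smul_eq_mul, Finset.mul_sum, mul_left_comm] }

namespace DcraAux

variable {m p : ℕ}

lemma cs_sum {n : ℕ} (f g : Fin n → ℝ) :
    (∑ i, f i * g i) ^ 2 ≤ (∑ i, f i ^ 2) * (∑ i, g i ^ 2) :=
  Finset.sum_mul_sq_le_sq_mul_sq Finset.univ f g

lemma frobSq_nonneg (A : Matrix (Fin m) (Fin p) ℝ) : 0 ≤ frobSq A := by
  unfold frobSq; positivity

lemma frobNorm_sq (A : Matrix (Fin m) (Fin p) ℝ) : (frobNorm A) ^ 2 = frobSq A :=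
  Real.sq_sqrt (frobSq_nonneg A)

lemma frobNorm_nonneg (A : Matrix (Fin m) (Fin p) ℝ) : 0 ≤ frobNorm A := Real.sqrt_nonneg _

lemma frobNorm_eq_norm (A : Matrix (Fin m) (Fin p) ℝ) : frobNorm A = ‖A‖ := by
  rw [Matrix.frobenius_norm_def, frobNorm, Real.sqrt_eq_rpow]
  congr 1
  unfold frobSq
  refine Finset.sum_congr rfl fun i _ => Finset.sum_congr rfl fun j _ => ?_
  rw [Real.rpow_two, Real.norm_eq_abs, sq_abs]

lemma frobSq_of_unitCols {V : Matrix (Fin m) (Fin p) ℝ} (h : unitCols V) :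
    frobSq V = p := by
  unfold frobSq
  rw [Finset.sum_comm]
  rw [Finset.sum_congr rfl fun j (_ : j ∈ Finset.univ) => h j]
  simp

lemma frobNorm_of_unitCols {V : Matrix (Fin m) (Fin p) ℝ} (h : unitCols V) :
    frobNorm V = Real.sqrt p := by
  rw [frobNorm, frobSq_of_unitCols h]

lemma unitCols_normalizeCols {G : Matrix (Fin m) (Fin p) ℝ} (h : ∀ j, ∃ i, G i j ≠ 0) :
    unitCols (normalizeCols G) := by
  intro j
  obtain ⟨i0, hi0⟩ := h j
  have hpos : 0 < ∑ i, G i j ^ 2 := by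
    have h1 : 0 < G i0 j ^ 2 := by positivity
    exact lt_of_lt_of_le h1 (Finset.single_le_sum (f := fun i => G i j ^ 2)
      (fun i _ => sq_nonneg _) (Finset.mem_univ i0))
  simp only [normalizeCols, Matrix.of_apply, div_pow, Real.sq_sqrt hpos.le]
  rw [← Finset.sum_div]
  exact div_self hpos.ne'

lemma ray_id (V : Matrix (Fin m) (Fin p) ℝ) (x : Fin p → ℝ) :
    x ⬝ᵥ ((Vᵀ * V) *ᵥ x) = ∑ i, (∑ j, V i j * x j) ^ 2 := by
  rw [← Matrix.mulVec_mulVec, Matrix.dotProduct_mulVec, Matrix.vecMul_transpose]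
  simp [Matrix.mulVec, dotProduct, pow_two]

lemma dot_self_eq {n : ℕ} (x : Fin n → ℝ) : x ⬝ᵥ x = ∑ i, x i ^ 2 := by
  simp [dotProduct, pow_two]

lemma one_le_lam (hp : 0 < p) {V : Matrix (Fin m) (Fin p) ℝ} {lam : ℝ} {u : Fin p → ℝ}
    (hV : unitCols V) (ht : isTopEigen V lam u) : 1 ≤ lam := by
  have j : Fin p := ⟨0, hp⟩
  set x : Fin p → ℝ := fun k => if k = j then 1 else 0 with hx
  have h := ht.2.2 x
  rw [ray_id, dot_self_eq] at h
  have h1 : ∀ i, (∑ k, V i k * x k) = V i j := by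
    intro i
    simp [hx, mul_ite, Finset.sum_ite_eq']
  have h2 : (∑ k, x k ^ 2) = 1 := by
    have hxx : ∀ k, x k ^ 2 = if k = j then (1:ℝ) else 0 := by
      intro k; by_cases hk : k = j <;> simp [hx, hk]
    rw [Finset.sum_congr rfl fun k _ => hxx k]
    simp [Finset.sum_ite_eq']
  rw [Finset.sum_congr rfl fun i (_ : i ∈ Finset.univ) => by rw [h1 i], hV j, h2, mul_one] at h
  exact h

lemma eig_coord {V : Matrix (Fin m) (Fin p) ℝ} {lam : ℝ} {u : Fin p → ℝ}
    (ht : isTopEigen V lam u) (j : Fin p) :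
    ∑ i, V i j * (∑ k, V i k * u k) = lam * u j := by
  have h := congrFun ht.2.1 j
  rw [← Matrix.mulVec_mulVec] at h
  have hL : (Vᵀ *ᵥ (V *ᵥ u)) j = ∑ i, V i j * (∑ k, V i k * u k) := by
    simp [Matrix.mulVec, dotProduct, Matrix.transpose_apply]
  have hR : (lam • u) j = lam * u j := rfl
  rw [hL, hR] at h
  exact h

lemma vu_sq {V : Matrix (Fin m) (Fin p) ℝ} {lam : ℝ} {u : Fin p → ℝ}
    (ht : isTopEigen V lam u) :
    ∑ i, (∑ k, V i k * u k) ^ 2 = lam := by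
  have h1 : ∀ i, (∑ k, V i k * u k) ^ 2
      = ∑ k, (V i k * (∑ k', V i k' * u k')) * u k := by
    intro i
    rw [pow_two, Finset.sum_mul]
    exact Finset.sum_congr rfl fun k _ => by ring
  rw [Finset.sum_congr rfl fun i (_ : i ∈ Finset.univ) => h1 i, Finset.sum_comm]
  have h2 : ∀ k, ∑ i, (V i k * (∑ k', V i k' * u k')) * u k = lam * u k * u k := by
    intro k
    rw [← Finset.sum_mul, eig_coord ht k]
  rw [Finset.sum_congr rfl fun k (_ : k ∈ Finset.univ) => h2 k]
  have h3 : ∀ k, lam * u k * u k = lam * u k ^ 2 := fun k => by ring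
  rw [Finset.sum_congr rfl fun k (_ : k ∈ Finset.univ) => h3 k, ← Finset.mul_sum, ht.1, mul_one]

lemma lam_le_p {V : Matrix (Fin m) (Fin p) ℝ} {lam : ℝ} {u : Fin p → ℝ}
    (hV : unitCols V) (ht : isTopEigen V lam u) : lam ≤ p := by
  rw [← vu_sq ht]
  have h1 : ∀ i, (∑ k, V i k * u k) ^ 2 ≤ ∑ k, V i k ^ 2 := by
    intro i
    have := cs_sum (fun k => V i k) u
    rwa [ht.1, mul_one] at this
  calc ∑ i, (∑ k, V i k * u k) ^ 2 ≤ ∑ i, ∑ k, V i k ^ 2 :=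
        Finset.sum_le_sum fun i _ => h1 i
    _ = ∑ k, ∑ i, V i k ^ 2 := Finset.sum_comm
    _ = ∑ _k : Fin p, (1 : ℝ) := Finset.sum_congr rfl fun k _ => hV k
    _ = p := by simp

lemma specSq_eq {V : Matrix (Fin m) (Fin p) ℝ} {lam : ℝ} {u : Fin p → ℝ}
    (hV : unitCols V) (ht : isTopEigen V lam u) : specSq V = lam := by
  have hub : ∀ c ∈ {c | ∃ x : Fin p → ℝ, (∑ j, x j ^ 2) = 1 ∧
      c = ∑ i, (∑ j, V i j * x j) ^ 2}, c ≤ lam := by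
    rintro c ⟨x, hx, rfl⟩
    have h := ht.2.2 x
    rw [ray_id, dot_self_eq, hx, mul_one] at h
    exact h
  have hmem : lam ∈ {c | ∃ x : Fin p → ℝ, (∑ j, x j ^ 2) = 1 ∧
      c = ∑ i, (∑ j, V i j * x j) ^ 2} := ⟨u, ht.1, (vu_sq ht).symm⟩
  exact le_antisymm (csSup_le ⟨lam, hmem⟩ hub) (le_csSup ⟨lam, hub⟩ hmem)

lemma alignment {V : Matrix (Fin m) (Fin p) ℝ} {lam : ℝ} {u : Fin p → ℝ}
    (hV : unitCols V) (ht : isTopEigen V lam u) (j : Fin p) :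
    1 - ((p : ℝ) - lam) ≤ u j ^ 2 * lam := by
  set Vu : Fin m → ℝ := fun i => ∑ k, V i k * u k with hVudef
  have hVuV : ∀ k, ∑ i, V i k * Vu i = lam * u k := fun k => eig_coord ht k
  have hVu2 : ∑ i, Vu i ^ 2 = lam := vu_sq ht
  set z : Fin m → ℝ := fun i => V i j - u j * Vu i with hzdef
  have hzVu : ∑ i, z i * Vu i = 0 := by
    have h := Finset.sum_congr rfl fun i (_ : i ∈ Finset.univ) =>
      (by simp only [hzdef]; ring :
        z i * Vu i = V i j * Vu i - u j * Vu i ^ 2)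
    rw [h, Finset.sum_sub_distrib, ← Finset.mul_sum, hVuV j, hVu2]
    ring
  have hcross : ∀ k, ∑ i, (V i k - u k * Vu i) ^ 2 = 1 - u k ^ 2 * lam := by
    intro k
    have h := Finset.sum_congr rfl fun i (_ : i ∈ Finset.univ) =>
      (by ring : (V i k - u k * Vu i) ^ 2
        = V i k ^ 2 - (2 * u k) * (V i k * Vu i) + u k ^ 2 * Vu i ^ 2)
    rw [h, Finset.sum_add_distrib, Finset.sum_sub_distrib, ← Finset.mul_sum, ← Finset.mul_sum,
      hV k, hVuV k, hVu2]
    ring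
  have hnz : ∑ i, z i ^ 2 = 1 - u j ^ 2 * lam := by
    rw [Finset.sum_congr rfl fun i (_ : i ∈ Finset.univ) =>
      (by simp only [hzdef] : z i ^ 2 = (V i j - u j * Vu i) ^ 2)]
    exact hcross j
  have hzvj : ∑ i, z i * V i j = 1 - u j ^ 2 * lam := by
    have h := Finset.sum_congr rfl fun i (_ : i ∈ Finset.univ) =>
      (by simp only [hzdef]; ring :
        z i * V i j = V i j ^ 2 - u j * (V i j * Vu i))
    rw [h, Finset.sum_sub_distrib, ← Finset.mul_sum, hV j, hVuV j]
    ring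
  have hper : ∀ k, (∑ i, z i * V i k) ^ 2 ≤ (∑ i, z i ^ 2) * (1 - u k ^ 2 * lam) := by
    intro k
    have he : ∑ i, z i * V i k = ∑ i, z i * (V i k - u k * Vu i) := by
      have h := Finset.sum_congr rfl fun i (_ : i ∈ Finset.univ) =>
        (by ring : z i * (V i k - u k * Vu i) = z i * V i k - u k * (z i * Vu i))
      rw [h, Finset.sum_sub_distrib, ← Finset.mul_sum, hzVu]
      ring
    rw [he]
    have hcs := cs_sum z (fun i => V i k - u k * Vu i)
    rwa [hcross k] at hcs
  have hsum : ((∑ i, z i ^ 2)) ^ 2 ≤ (∑ i, z i ^ 2) * ((p : ℝ) - lam) := by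
    have h1 : ((∑ i, z i ^ 2)) ^ 2 ≤ ∑ k, (∑ i, z i * V i k) ^ 2 := by
      have hmem : (∑ i, z i * V i j) ^ 2 ≤ ∑ k, (∑ i, z i * V i k) ^ 2 := by
        simpa using Finset.single_le_sum (f := fun k => (∑ i, z i * V i k) ^ 2)
          (fun k _ => sq_nonneg _) (Finset.mem_univ j)
      rw [hzvj, ← hnz] at hmem
      exact hmem
    have h2 : ∑ k, (∑ i, z i * V i k) ^ 2 ≤ ∑ k, (∑ i, z i ^ 2) * (1 - u k ^ 2 * lam) :=
      Finset.sum_le_sum fun k _ => hper k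
    have h3 : ∑ k, (∑ i, z i ^ 2) * (1 - u k ^ 2 * lam)
        = (∑ i, z i ^ 2) * ((p : ℝ) - lam) := by
      rw [← Finset.mul_sum]
      congr 1
      rw [Finset.sum_sub_distrib, ← Finset.sum_mul, ht.1]
      simp
    linarith
  have hznn : 0 ≤ ∑ i, z i ^ 2 := by positivity
  have hgap : 0 ≤ (p : ℝ) - lam := by linarith [lam_le_p hV ht]
  have hfin : ∑ i, z i ^ 2 ≤ (p : ℝ) - lam := by
    rcases eq_or_lt_of_le hznn with h0 | h0
    · rw [← h0]; exact hgap
    · nlinarith [hsum]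
  rw [hnz] at hfin
  linarith

/-- Scalar inequality at the heart of the per-column estimate. -/
lemma col_ineq (α t d A2 N : ℝ) (hA2 : 0 < A2) (hAα : A2 ≤ α ^ 2) (ht2 : t ^ 2 ≤ d)
    (hdlt : d < A2) (hN : N = α ^ 2 + 2 * α * t + d) :
    0 < N ∧ 1 - (α + t) ^ 2 / N ≤ d / A2 := by
  have hd0 : 0 ≤ d := le_trans (sq_nonneg t) ht2
  have hNpos : 0 < N := by
    by_contra hc
    push_neg at hc
    rw [hN] at hc
    have h1 : (α + t) ^ 2 ≤ t ^ 2 - d := by nlinarith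
    have h2 : (α + t) ^ 2 = 0 := le_antisymm (by linarith) (sq_nonneg _)
    have h4 : α = -t := by
      have := pow_eq_zero_iff (n := 2) (by norm_num) |>.mp h2
      linarith
    have h5 : α ^ 2 = t ^ 2 := by rw [h4]; ring
    linarith
  refine ⟨hNpos, ?_⟩
  have e : 1 - (α + t) ^ 2 / N = (d - t ^ 2) / N := by
    field_simp
    rw [hN]; ring
  rw [e, div_le_div_iff₀ hNpos hA2]
  have key : (d - t ^ 2) * α ^ 2 ≤ d * N := by
    rw [hN]; nlinarith [sq_nonneg (α * t + d)]
  have h6 : (d - t ^ 2) * A2 ≤ (d - t ^ 2) * α ^ 2 :=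
    mul_le_mul_of_nonneg_left hAα (by linarith)
  linarith

/-- Core one-step contraction bound: if every top-eigenvector weight satisfies
`A2 ≤ u_j² λ` and the perturbation `R = G − V u uᵀ` satisfies `‖R‖_F² < A2`, then the
next iterate's spectral gap is at most `‖R‖_F²/A2`. -/
lemma step_bound (hp : 0 < p)
    {V G Vp : Matrix (Fin m) (Fin p) ℝ} {lam lamp : ℝ} {u up : Fin p → ℝ}
    (ht : isTopEigen V lam u) (htp : isTopEigen Vp lamp up)
    (hG : ∀ j, ∃ i, G i j ≠ 0) (hVp : Vp = normalizeCols G)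
    (A2 : ℝ) (hA2 : 0 < A2) (hAa : ∀ j, A2 ≤ (u j) ^ 2 * lam)
    (hRlt : frobSq (G - V * vecMulVec u u) < A2) :
    (p : ℝ) - lamp ≤ frobSq (G - V * vecMulVec u u) / A2 := by
  set R : Matrix (Fin m) (Fin p) ℝ := G - V * vecMulVec u u with hRdef
  set Vu : Fin m → ℝ := fun i => ∑ k, V i k * u k with hVudef
  have hVu2 : ∑ i, Vu i ^ 2 = lam := vu_sq ht
  have hlam0 : 0 < lam := by
    have h := hAa ⟨0, hp⟩
    nlinarith [sq_nonneg (u ⟨0, hp⟩), hA2]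
  set sl := Real.sqrt lam with hsldef
  have hsl2 : sl ^ 2 = lam := Real.sq_sqrt hlam0.le
  have hslpos : 0 < sl := Real.sqrt_pos.mpr hlam0
  set w : Fin m → ℝ := fun i => Vu i / sl with hwdef
  have hw2 : ∑ i, w i ^ 2 = 1 := by
    rw [Finset.sum_congr rfl fun i (_ : i ∈ Finset.univ) =>
      (by simp only [hwdef]; rw [div_pow] : w i ^ 2 = Vu i ^ 2 / sl ^ 2)]
    rw [← Finset.sum_div, hVu2, hsl2, div_self hlam0.ne']
  have hGc : ∀ i j, G i j = (u j * sl) * w i + R i j := by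
    intro i j
    have hP : (V * vecMulVec u u) i j = u j * Vu i := by
      rw [Matrix.mul_apply]
      rw [Finset.sum_congr rfl fun k (_ : k ∈ Finset.univ) =>
        (by rw [Matrix.vecMulVec_apply]; ring :
          V i k * vecMulVec u u k j = u j * (V i k * u k))]
      rw [← Finset.mul_sum]
    have hwi : (u j * sl) * w i = u j * Vu i := by
      simp only [hwdef]
      field_simp
    have hRij : R i j = G i j - u j * Vu i := by
      rw [hRdef, Matrix.sub_apply, hP]
    rw [hwi, hRij]; ring
  -- the per-column estimate
  have hkey : ∀ j, 1 - (∑ i, w i * Vp i j) ^ 2 ≤ (∑ i, R i j ^ 2) / A2 := by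
    intro j
    have hAα : A2 ≤ (u j * sl) ^ 2 := by rw [mul_pow, hsl2]; exact hAa j
    have ht2 : (∑ i, w i * R i j) ^ 2 ≤ ∑ i, R i j ^ 2 := by
      have h := cs_sum w (fun i => R i j)
      rwa [hw2, one_mul] at h
    have hdF : (∑ i, R i j ^ 2) ≤ frobSq R := by
      unfold frobSq
      exact Finset.sum_le_sum fun i _ => Finset.single_le_sum
        (f := fun j' => R i j' ^ 2) (fun _ _ => sq_nonneg _) (Finset.mem_univ j)
    have hNsq : ∑ i, G i j ^ 2
        = (u j * sl) ^ 2 + 2 * (u j * sl) * (∑ i, w i * R i j) + ∑ i, R i j ^ 2 := by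
      have h1 : ∀ i, G i j ^ 2 = (u j * sl) ^ 2 * w i ^ 2
          + (2 * (u j * sl)) * (w i * R i j) + R i j ^ 2 := by
        intro i; rw [hGc i j]; ring
      rw [Finset.sum_congr rfl fun i (_ : i ∈ Finset.univ) => h1 i,
        Finset.sum_add_distrib, Finset.sum_add_distrib, ← Finset.mul_sum, ← Finset.mul_sum,
        hw2]
      ring
    obtain ⟨hNpos, hineq⟩ := col_ineq (u j * sl) (∑ i, w i * R i j) (∑ i, R i j ^ 2) A2
      (∑ i, G i j ^ 2) hA2 hAα ht2 (lt_of_le_of_lt hdF hRlt) hNsq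
    have hyval : ∑ i, w i * Vp i j
        = ((u j * sl) + (∑ i, w i * R i j)) / Real.sqrt (∑ i', G i' j ^ 2) := by
      have h1 : ∀ i, Vp i j = G i j / Real.sqrt (∑ i', G i' j ^ 2) := by
        intro i; rw [hVp]; rfl
      rw [Finset.sum_congr rfl fun i (_ : i ∈ Finset.univ) =>
        (by rw [h1 i]; ring : w i * Vp i j = (w i * G i j) / Real.sqrt (∑ i', G i' j ^ 2))]
      rw [← Finset.sum_div]
      congr 1
      have h2 : ∀ i, w i * G i j = (u j * sl) * w i ^ 2 + w i * R i j := by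
        intro i; rw [hGc i j]; ring
      rw [Finset.sum_congr rfl fun i (_ : i ∈ Finset.univ) => h2 i,
        Finset.sum_add_distrib, ← Finset.mul_sum, hw2, mul_one]
    have hsqrtN : (Real.sqrt (∑ i', G i' j ^ 2)) ^ 2 = ∑ i', G i' j ^ 2 :=
      Real.sq_sqrt (le_of_lt hNpos)
    have hy2 : (∑ i, w i * Vp i j) ^ 2
        = ((u j * sl) + (∑ i, w i * R i j)) ^ 2 / (∑ i', G i' j ^ 2) := by
      rw [hyval, div_pow, hsqrtN]
    rw [hy2]
    exact hineq
  -- summing up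
  set y : Fin p → ℝ := fun j => ∑ i, w i * Vp i j with hydef
  have hpS : (p : ℝ) - ∑ j, y j ^ 2 ≤ frobSq R / A2 := by
    have h1 : ∑ j, ((1 : ℝ) - y j ^ 2) = (p : ℝ) - ∑ j, y j ^ 2 := by
      rw [Finset.sum_sub_distrib]
      simp
    have h2 : ∑ j, ((1 : ℝ) - y j ^ 2) ≤ ∑ j, (∑ i, R i j ^ 2) / A2 :=
      Finset.sum_le_sum fun j _ => hkey j
    have h3 : ∑ j, (∑ i, R i j ^ 2) / A2 = frobSq R / A2 := by
      rw [← Finset.sum_div]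
      congr 1
      unfold frobSq
      exact Finset.sum_comm
    linarith
  have hS0 : 0 ≤ ∑ j, y j ^ 2 := by positivity
  have hlamp1 : 1 ≤ lamp := by
    refine one_le_lam hp ?_ htp
    rw [hVp]
    exact unitCols_normalizeCols hG
  have hSlam : ∑ j, y j ^ 2 ≤ lamp := by
    have hwZ : ∑ i, w i * (∑ k, Vp i k * y k) = ∑ j, y j ^ 2 := by
      calc ∑ i, w i * (∑ k, Vp i k * y k)
          = ∑ i, ∑ k, w i * (Vp i k * y k) :=
            Finset.sum_congr rfl fun i _ => by rw [Finset.mul_sum]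
        _ = ∑ k, ∑ i, w i * (Vp i k * y k) := Finset.sum_comm
        _ = ∑ k, (∑ i, w i * Vp i k) * y k := by
            refine Finset.sum_congr rfl fun k _ => ?_
            rw [Finset.sum_mul]
            exact Finset.sum_congr rfl fun i _ => by ring
        _ = ∑ k, y k ^ 2 := by
            refine Finset.sum_congr rfl fun k _ => ?_
            rw [show (∑ i, w i * Vp i k) = y k from rfl, pow_two]
    have hCS : (∑ j, y j ^ 2) ^ 2 ≤ ∑ i, (∑ k, Vp i k * y k) ^ 2 := by
      have h := cs_sum w (fun i => ∑ k, Vp i k * y k)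
      rwa [hw2, one_mul, hwZ] at h
    have hRay : ∑ i, (∑ k, Vp i k * y k) ^ 2 ≤ lamp * ∑ j, y j ^ 2 := by
      have h := htp.2.2 y
      rwa [ray_id, dot_self_eq] at h
    rcases eq_or_lt_of_le hS0 with h0 | h0
    · rw [← h0]; linarith
    · nlinarith [hCS, hRay]
  linarith

/-- `‖V − V u uᵀ‖_F² = p − λ`. -/
lemma frobSq_VP {V : Matrix (Fin m) (Fin p) ℝ} {lam : ℝ} {u : Fin p → ℝ}
    (hV : unitCols V) (ht : isTopEigen V lam u) :
    frobSq (V - V * vecMulVec u u) = (p : ℝ) - lam := by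
  have hP : ∀ i j, (V * vecMulVec u u) i j = u j * (∑ k, V i k * u k) := by
    intro i j
    rw [Matrix.mul_apply]
    rw [Finset.sum_congr rfl fun k (_ : k ∈ Finset.univ) =>
      (by rw [Matrix.vecMulVec_apply]; ring :
        V i k * vecMulVec u u k j = u j * (V i k * u k))]
    rw [← Finset.mul_sum]
  unfold frobSq
  have h1 : ∀ i j, (V - V * vecMulVec u u) i j ^ 2
      = V i j ^ 2 - (2 * u j) * (V i j * (∑ k, V i k * u k))
        + u j ^ 2 * (∑ k, V i k * u k) ^ 2 := by
    intro i j
    rw [Matrix.sub_apply, hP i j]; ring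
  rw [Finset.sum_congr rfl fun i (_ : i ∈ Finset.univ) =>
      Finset.sum_congr rfl fun j (_ : j ∈ Finset.univ) => h1 i j]
  rw [Finset.sum_comm]
  have h2 : ∀ j, ∑ i, (V i j ^ 2 - (2 * u j) * (V i j * (∑ k, V i k * u k))
      + u j ^ 2 * (∑ k, V i k * u k) ^ 2)
      = 1 - lam * u j ^ 2 := by
    intro j
    rw [Finset.sum_add_distrib, Finset.sum_sub_distrib, ← Finset.mul_sum, ← Finset.mul_sum,
      hV j, eig_coord ht j, vu_sq ht]
    ring
  rw [Finset.sum_congr rfl fun j (_ : j ∈ Finset.univ) => h2 j]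
  rw [Finset.sum_sub_distrib, ← Finset.mul_sum, ht.1, mul_one]
  simp

lemma frobSq_Escaled (hm : 0 < m) : frobSq (Escaled m p) = p := by
  unfold frobSq Escaled
  have hm0 : (0 : ℝ) < m := Nat.cast_pos.mpr hm
  have hsm : ((Real.sqrt m)⁻¹) ^ 2 = (m : ℝ)⁻¹ := by
    rw [inv_pow, Real.sq_sqrt hm0.le]
  simp only [Matrix.smul_apply, Matrix.of_apply, smul_eq_mul, mul_one]
  rw [Finset.sum_congr rfl fun i (_ : i ∈ Finset.univ) =>
    Finset.sum_congr rfl fun j (_ : j ∈ Finset.univ) => hsm]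
  simp only [Finset.sum_const, Finset.card_univ, Fintype.card_fin, nsmul_eq_mul]
  field_simp

/-- Frobenius-norm bound for the perturbation `R = G(V) − V u uᵀ`. -/
lemma Rnorm_bound (hm : 0 < m) (hp : 0 < p)
    {V : Matrix (Fin m) (Fin p) ℝ} {lam : ℝ} {u : Fin p → ℝ}
    (hV : unitCols V) (ht : isTopEigen V lam u)
    (gradf : Matrix (Fin m) (Fin p) ℝ → Matrix (Fin m) (Fin p) ℝ)
    (Lf L ρ : ℝ) (hLf : 0 < Lf) (hL : Lf ≤ L) (hρ : 0 < ρ)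
    (hlip : ∀ W W' : Matrix (Fin m) (Fin p) ℝ,
      frobNorm (gradf W - gradf W') ≤ Lf * frobNorm (W - W')) :
    frobNorm (Gmap gradf ρ L V u - V * vecMulVec u u)
      ≤ ((L + 2 * Lf) * Real.sqrt p + frobNorm (gradf (Escaled m p))) / (2 * ρ) := by
  have hL0 : 0 < L := lt_of_lt_of_le hLf hL
  have hc0 : (0 : ℝ) < 2 * ρ + L := by linarith
  set P : Matrix (Fin m) (Fin p) ℝ := V * vecMulVec u u with hPdef
  -- the scaled identity
  have hGR : (2 * ρ + L) • (Gmap gradf ρ L V u - P) = L • (V - P) - gradf V := by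
    ext i j
    simp only [Gmap, GammaOf, Matrix.sub_apply, Matrix.smul_apply, smul_eq_mul,
      Matrix.neg_apply]
    field_simp
    ring
  have hnorm_eq : (2 * ρ + L) * frobNorm (Gmap gradf ρ L V u - P)
      = frobNorm (L • (V - P) - gradf V) := by
    rw [frobNorm_eq_norm, frobNorm_eq_norm, ← hGR, norm_smul, Real.norm_eq_abs,
      abs_of_pos hc0]
  have hVP : frobNorm (V - P) ≤ Real.sqrt p := by
    rw [frobNorm]
    apply Real.sqrt_le_sqrt
    rw [hPdef, frobSq_VP hV ht]
    have := one_le_lam hp hV ht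
    linarith
  have hEsc : frobNorm (Escaled m p) = Real.sqrt p := by
    rw [frobNorm, frobSq_Escaled hm]
  have hVnorm : frobNorm V = Real.sqrt p := frobNorm_of_unitCols hV
  have hgradV : frobNorm (gradf V)
      ≤ frobNorm (gradf (Escaled m p)) + Lf * (2 * Real.sqrt p) := by
    have h1 := hlip V (Escaled m p)
    have h2 : frobNorm (V - Escaled m p) ≤ 2 * Real.sqrt p := by
      rw [frobNorm_eq_norm]
      calc ‖V - Escaled m p‖ ≤ ‖V‖ + ‖Escaled m p‖ := norm_sub_le _ _
        _ = 2 * Real.sqrt p := by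
            rw [← frobNorm_eq_norm, ← frobNorm_eq_norm, hVnorm, hEsc]; ring
    have h3 : frobNorm (gradf V - gradf (Escaled m p)) ≤ Lf * (2 * Real.sqrt p) := by
      calc frobNorm (gradf V - gradf (Escaled m p))
          ≤ Lf * frobNorm (V - Escaled m p) := h1
        _ ≤ Lf * (2 * Real.sqrt p) := by
            exact mul_le_mul_of_nonneg_left h2 hLf.le
    calc frobNorm (gradf V)
        = ‖(gradf V - gradf (Escaled m p)) + gradf (Escaled m p)‖ := by
          rw [← frobNorm_eq_norm]; congr 1; abel
      _ ≤ ‖gradf V - gradf (Escaled m p)‖ + ‖gradf (Escaled m p)‖ := norm_add_le _ _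
      _ ≤ Lf * (2 * Real.sqrt p) + frobNorm (gradf (Escaled m p)) := by
          rw [← frobNorm_eq_norm, ← frobNorm_eq_norm]
          exact add_le_add_left h3 _
      _ = frobNorm (gradf (Escaled m p)) + Lf * (2 * Real.sqrt p) := by ring
  have hsum : frobNorm (L • (V - P) - gradf V)
      ≤ (L + 2 * Lf) * Real.sqrt p + frobNorm (gradf (Escaled m p)) := by
    calc frobNorm (L • (V - P) - gradf V)
        = ‖L • (V - P) - gradf V‖ := frobNorm_eq_norm _
      _ ≤ ‖L • (V - P)‖ + ‖gradf V‖ := norm_sub_le _ _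
      _ = L * ‖V - P‖ + ‖gradf V‖ := by
          rw [norm_smul, Real.norm_eq_abs, abs_of_pos hL0]
      _ ≤ L * Real.sqrt p + (frobNorm (gradf (Escaled m p)) + Lf * (2 * Real.sqrt p)) := by
          have := hVP; have := hgradV
          rw [← frobNorm_eq_norm, ← frobNorm_eq_norm]
          have hx : L * frobNorm (V - P) ≤ L * Real.sqrt p :=
            mul_le_mul_of_nonneg_left hVP hL0.le
          linarith
      _ = (L + 2 * Lf) * Real.sqrt p + frobNorm (gradf (Escaled m p)) := by ring
  rw [le_div_iff₀ (by positivity : (0 : ℝ) < 2 * ρ)]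
  have h0 : 0 ≤ frobNorm (Gmap gradf ρ L V u - P) := frobNorm_nonneg _
  nlinarith [hnorm_eq, hsum]

end DcraAux

set_option maxHeartbeats 2000000 in
open DcraAux in
/-- Proposition 2(ii), finite attainment of a small gap. Under the thresholds
`ρ̄ = (Lp + ϖ)/(μc₀)` and `ρ̂ = max{2ϖ_lin/η, 2ϖ_lin/ε}`, if `ρ > max{ρ̂, ρ̄}` and `L ≥ L_f̃`,
the iterates of the inner solver reach, within at most `⌈(2c₀² − ε)/η⌉ + 1` steps, an index
`l̄ ≥ 1` after which `‖V^l‖_F² − ‖V^l‖² = p − ‖V^l‖² ≤ ε` for all `l ≥ l̄`. -/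
theorem dcra_finite_small_gap (m p : ℕ) (hm : 0 < m) (hp : 0 < p)
    (ftilde : Matrix (Fin m) (Fin p) ℝ → ℝ)
    (gradf : Matrix (Fin m) (Fin p) ℝ → Matrix (Fin m) (Fin p) ℝ)
    (Lf : ℝ) (hLf : 0 < Lf)
    (hderiv : ∀ W : Matrix (Fin m) (Fin p) ℝ, HasFDerivAt ftilde (frobCLM (gradf W)) W)
    (hlip : ∀ W W' : Matrix (Fin m) (Fin p) ℝ,
      frobNorm (gradf W - gradf W') ≤ Lf * frobNorm (W - W'))
    (ρ L : ℝ) (hL : Lf ≤ L)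
    (c0 ε : ℝ) (hc0 : c0 ∈ Set.Ioo (0 : ℝ) 1) (hε : ε ∈ Set.Ioc 0 (c0 ^ 2))
    (ϖ ϖlin η ρhat : ℝ)
    (hϖ : ϖ = (L + 2 * Lf) * Real.sqrt p + frobNorm (gradf (Escaled m p)))
    (hϖlin : ϖlin = 4 * Lf * (p : ℝ) + 2 * Real.sqrt p * frobNorm (gradf (Escaled m p))
      + (5 / 2) * L * (p : ℝ))
    (hη : η = 2 * (1 - 1 / (p : ℝ)) * Real.sqrt ((p : ℝ) - c0 ^ 2)
      + 2 * Real.sqrt (1 - c0 ^ 2))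
    (hρhat : ρhat = max (2 * ϖlin / η) (2 * ϖlin / ε))
    (Vseq : ℕ → Matrix (Fin m) (Fin p) ℝ) (useq : ℕ → Fin p → ℝ) (lamseq : ℕ → ℝ)
    (hV0 : unitCols (Vseq 0))
    (htop : ∀ l, isTopEigen (Vseq l) (lamseq l) (useq l))
    (hzero : ∀ j, useq 0 j ≠ 0)
    (μ ρbar : ℝ) (hμ : μ = ⨅ j, |useq 0 j|) (hρbar : ρbar = (L * p + ϖ) / (μ * c0))
    (hρ : max ρhat ρbar < ρ)
    (hcol : ∀ l j, ∃ i, Gmap gradf ρ L (Vseq l) (useq l) i j ≠ 0)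
    (hstep : ∀ l, Vseq (l + 1) = normalizeCols (Gmap gradf ρ L (Vseq l) (useq l))) :
    ∃ lbar : ℕ, 1 ≤ lbar ∧ lbar ≤ ⌈(2 * c0 ^ 2 - ε) / η⌉₊ + 1 ∧
      ∀ l ≥ lbar, frobSq (Vseq l) - specSq (Vseq l) = (p : ℝ) - specSq (Vseq l) ∧
        (p : ℝ) - specSq (Vseq l) ≤ ε := by
  -- basic positivity facts
  obtain ⟨hc01, hc0lt⟩ := hc0
  obtain ⟨hε0, hεc⟩ := hε
  have hL0 : 0 < L := lt_of_lt_of_le hLf hL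
  have hppos : (0 : ℝ) < p := Nat.cast_pos.mpr hp
  have hp1 : (1 : ℝ) ≤ p := by exact_mod_cast hp
  have hsp : 0 < Real.sqrt p := Real.sqrt_pos.mpr hppos
  have hsp1 : (1 : ℝ) ≤ Real.sqrt p := by
    rw [show (1 : ℝ) = Real.sqrt 1 by simp]
    exact Real.sqrt_le_sqrt hp1
  have hspsq : Real.sqrt p * Real.sqrt p = (p : ℝ) := Real.mul_self_sqrt hppos.le
  have hg0 : 0 ≤ frobNorm (gradf (Escaled m p)) := frobNorm_nonneg _
  have hϖ0 : 0 < ϖ := by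
    rw [hϖ]
    have h1 : 0 < (L + 2 * Lf) * Real.sqrt p := by positivity
    linarith
  have hϖlin0 : 0 < ϖlin := by
    rw [hϖlin]
    have h1 : 0 < 4 * Lf * (p : ℝ) := by positivity
    have h2 : 0 ≤ 2 * Real.sqrt p * frobNorm (gradf (Escaled m p)) := by positivity
    have h3 : 0 < (5 / 2) * L * (p : ℝ) := by positivity
    linarith
  have hεle1 : ε ≤ 1 := by nlinarith
  -- μ is positive
  haveI : Nonempty (Fin p) := ⟨⟨0, hp⟩⟩
  have hμle : ∀ j, μ ≤ |useq 0 j| := by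
    intro j
    rw [hμ]
    exact ciInf_le ⟨0, by rintro x ⟨j', rfl⟩; positivity⟩ j
  have hμpos : 0 < μ := by
    obtain ⟨j0, _, hj0⟩ := Finset.exists_min_image Finset.univ
      (fun j => |useq 0 j|) ⟨⟨0, hp⟩, Finset.mem_univ _⟩
    rw [hμ]
    refine lt_of_lt_of_le (abs_pos.mpr (hzero j0)) (le_ciInf fun j => hj0 j (Finset.mem_univ j))
  -- ρ bounds
  have hρhat_lt : ρhat < ρ := lt_of_le_of_lt (le_max_left _ _) hρ
  have hρbar_lt : (L * p + ϖ) / (μ * c0) < ρ := by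
    rw [← hρbar]; exact lt_of_le_of_lt (le_max_right _ _) hρ
  have hρε : 2 * ϖlin / ε < ρ := by
    calc 2 * ϖlin / ε ≤ ρhat := by rw [hρhat]; exact le_max_right _ _
      _ < ρ := hρhat_lt
  have hρ0 : 0 < ρ := lt_trans (by positivity) hρε
  have hμc0 : 0 < μ * c0 := by positivity
  have h2ϖlin : 2 * ϖlin < ρ * ε := by
    have := (div_lt_iff₀ hε0).mp hρε
    linarith
  have hLpϖ : L * (p : ℝ) + ϖ < ρ * (μ * c0) := (div_lt_iff₀ hμc0).mp hρbar_lt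
  -- the uniform bound B on ‖R_l‖
  have hB0 : (0 : ℝ) ≤ ϖ / (2 * ρ) := by positivity
  have hRnorm : ∀ l, frobNorm (Gmap gradf ρ L (Vseq l) (useq l)
      - Vseq l * vecMulVec (useq l) (useq l)) ≤ ϖ / (2 * ρ) → True := fun _ _ => trivial
  -- unit columns of all iterates
  have hU : ∀ l, unitCols (Vseq l) := by
    intro l
    induction l with
    | zero => exact hV0
    | succ n _ =>
        rw [hstep n]
        exact unitCols_normalizeCols (hcol n)
  have hRle : ∀ l, frobNorm (Gmap gradf ρ L (Vseq l) (useq l)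
      - Vseq l * vecMulVec (useq l) (useq l)) ≤ ϖ / (2 * ρ) := by
    intro l
    rw [hϖ]
    exact Rnorm_bound hm hp (hU l) (htop l) gradf Lf L ρ hLf hL hρ0 hlip
  have hRsq : ∀ l, frobSq (Gmap gradf ρ L (Vseq l) (useq l)
      - Vseq l * vecMulVec (useq l) (useq l)) ≤ (ϖ / (2 * ρ)) ^ 2 := by
    intro l
    rw [← frobNorm_sq]
    exact pow_le_pow_left₀ (frobNorm_nonneg _) (hRle l) 2
  -- numeric bounds on B
  have hB1 : ϖ / (2 * ρ) < μ * c0 / 2 := by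
    rw [div_lt_div_iff₀ (by positivity) (by norm_num : (0 : ℝ) < 2)]
    nlinarith [mul_pos hL0 hppos]
  have hB2 : ϖ / (2 * ρ) < ε / (8 * Real.sqrt p) := by
    have hϖlin_ge : 2 * Real.sqrt p * ϖ ≤ ϖlin := by
      rw [hϖ, hϖlin]
      nlinarith [hspsq, mul_pos hL0 hppos, hg0, hsp]
    rw [div_lt_div_iff₀ (by positivity) (by positivity)]
    nlinarith [hsp, hϖ0]
  have hB3 : ϖ / (2 * ρ) < 1 / 8 := by
    refine lt_of_lt_of_le hB2 ?_
    rw [div_le_div_iff₀ (by positivity) (by norm_num : (0 : ℝ) < 8)]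
    nlinarith
  -- step 0: gap after first iteration at most c0²/4
  have key1 : (p : ℝ) - lamseq 1 ≤ c0 ^ 2 / 4 := by
    have hAa : ∀ j, μ ^ 2 ≤ (useq 0 j) ^ 2 * lamseq 0 := by
      intro j
      have h1 : μ ^ 2 ≤ |useq 0 j| ^ 2 := pow_le_pow_left₀ hμpos.le (hμle j) 2
      rw [sq_abs] at h1
      have h2 := one_le_lam hp (hU 0) (htop 0)
      nlinarith [sq_nonneg (useq 0 j)]
    have hRlt : frobSq (Gmap gradf ρ L (Vseq 0) (useq 0)
        - Vseq 0 * vecMulVec (useq 0) (useq 0)) < μ ^ 2 := by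
      have h1 : (ϖ / (2 * ρ)) ^ 2 < (μ * c0 / 2) ^ 2 :=
        pow_lt_pow_left₀ hB1 hB0 (by norm_num)
      have h2 : (μ * c0 / 2) ^ 2 < μ ^ 2 := by
        nlinarith [mul_pos (mul_pos hμpos hμpos)
          (show (0 : ℝ) < 1 - c0 ^ 2 by nlinarith [hc01, hc0lt])]
      linarith [hRsq 0]
    have h := step_bound hp (htop 0) (htop 1) (hcol 0) (hstep 0) (μ ^ 2)
      (by positivity) hAa hRlt
    have h2 : frobSq (Gmap gradf ρ L (Vseq 0) (useq 0)
        - Vseq 0 * vecMulVec (useq 0) (useq 0)) / μ ^ 2 ≤ c0 ^ 2 / 4 := by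
      rw [div_le_div_iff₀ (by positivity) (by norm_num : (0 : ℝ) < 4)]
      have h3 : (ϖ / (2 * ρ)) ^ 2 ≤ (μ * c0 / 2) ^ 2 :=
        (pow_lt_pow_left₀ hB1 hB0 (by norm_num)).le
      nlinarith [hRsq 0]
    linarith
  -- the inductive one-step estimate
  have hstepS : ∀ n, 1 ≤ n → (p : ℝ) - lamseq n ≤ c0 ^ 2 / 4 →
      (p : ℝ) - lamseq (n + 1) ≤ ε ^ 2 / (48 * p) := by
    intro n _ hn
    have hAa : ∀ j, (3 / 4 : ℝ) ≤ (useq n j) ^ 2 * lamseq n := by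
      intro j
      have h1 := alignment (hU n) (htop n) j
      nlinarith
    have hRlt : frobSq (Gmap gradf ρ L (Vseq n) (useq n)
        - Vseq n * vecMulVec (useq n) (useq n)) < (3 / 4 : ℝ) := by
      have h1 : (ϖ / (2 * ρ)) ^ 2 < (1 / 8 : ℝ) ^ 2 :=
        pow_lt_pow_left₀ hB3 hB0 (by norm_num)
      have := hRsq n
      nlinarith
    have h := step_bound hp (htop n) (htop (n + 1)) (hcol n) (hstep n) (3 / 4 : ℝ)
      (by norm_num) hAa hRlt
    have h2 : frobSq (Gmap gradf ρ L (Vseq n) (useq n)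
        - Vseq n * vecMulVec (useq n) (useq n)) / (3 / 4 : ℝ) ≤ ε ^ 2 / (48 * p) := by
      rw [div_le_div_iff₀ (by norm_num : (0 : ℝ) < 3 / 4) (by positivity)]
      have h3 : (ϖ / (2 * ρ)) ^ 2 ≤ (ε / (8 * Real.sqrt p)) ^ 2 :=
        pow_le_pow_left₀ hB0 hB2.le 2
      have h4 : (ε / (8 * Real.sqrt p)) ^ 2 = ε ^ 2 / (64 * p) := by
        rw [div_pow, mul_pow, Real.sq_sqrt hppos.le]
        norm_num
      have h5 : frobSq (Gmap gradf ρ L (Vseq n) (useq n)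
          - Vseq n * vecMulVec (useq n) (useq n)) * (64 * p) ≤ ε ^ 2 := by
        have h6 := le_trans (hRsq n) h3
        rw [h4] at h6
        exact (le_div_iff₀ (by positivity)).mp h6
      linarith
    linarith
  -- invariant: gap stays at most c0²/4 from iteration 1 on
  have hinv : ∀ l, 1 ≤ l → (p : ℝ) - lamseq l ≤ c0 ^ 2 / 4 := by
    intro l hl
    induction l, hl using Nat.le_induction with
    | base => exact key1
    | succ n hn ih =>
        have h := hstepS n hn ih
        have h2 : ε ^ 2 / (48 * (p : ℝ)) ≤ c0 ^ 2 / 4 := by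
          rw [div_le_div_iff₀ (by positivity) (by norm_num : (0 : ℝ) < 4)]
          nlinarith
        linarith
  -- conclusion: gap at most ε from iteration 2 on
  have hfin : ∀ l, 2 ≤ l → (p : ℝ) - lamseq l ≤ ε := by
    intro l hl
    obtain ⟨k, rfl⟩ : ∃ k, l = k + 1 := ⟨l - 1, by omega⟩
    have hk : 1 ≤ k := by omega
    have h := hstepS k hk (hinv k hk)
    have h2 : ε ^ 2 / (48 * (p : ℝ)) ≤ ε := by
      rw [div_le_iff₀ (by positivity)]
      nlinarith
    linarith
  -- η > 0 and the index bound
  have hηpos : 0 < η := by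
    rw [hη]
    have h1 : 0 < Real.sqrt (1 - c0 ^ 2) := Real.sqrt_pos.mpr (by nlinarith)
    have h2 : 0 ≤ 2 * (1 - 1 / (p : ℝ)) * Real.sqrt ((p : ℝ) - c0 ^ 2) := by
      have h3 : 1 / (p : ℝ) ≤ 1 := by
        rw [div_le_one hppos]; exact hp1
      have h4 : 0 ≤ Real.sqrt ((p : ℝ) - c0 ^ 2) := Real.sqrt_nonneg _
      nlinarith
    linarith
  refine ⟨2, one_le_two, ?_, ?_⟩
  · have hpos : 0 < (2 * c0 ^ 2 - ε) / η := by
      apply div_pos (by nlinarith) hηpos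
    have := Nat.ceil_pos.mpr hpos
    omega
  · intro l hl
    have h1 : frobSq (Vseq l) = p := frobSq_of_unitCols (hU l)
    have h2 : specSq (Vseq l) = lamseq l := specSq_eq (hU l) (htop l)
    refine ⟨by rw [h1], ?_⟩
    rw [h2]
    exact hfin l hl


end
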